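/- Let k, l ∈ ℝ² be nonzero vectors and set m := k + l, assumed nonzero. Then sg(k)·|k| − sg(l)·|l| ≠ sg(m)·|m| and sg(k)·|k| − sg(l)·|l| ≠ −sg(m)·|m|. In other words, the sets { (k, l) : k ≠ 0, l ≠ 0, m = k + l ≠ 0, sg(k)|k| − sg(l)|l| = ±sg(m)|m| } are both empty. -/

import Mathlib

/-- The generalized sign of a nonzero vector `k ∈ ℝ²`: `sg k = 1` iff `k₁ > 0` or
(`k₁ = 0` and `k₂ > 0`), and `sg k = −1` otherwise. -/
noncomputable def sg (k : EuclideanSpace ℝ (Fin 2)) : ℝ :=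
  if 0 < k 0 ∨ (k 0 = 0 ∧ 0 < k 1) then 1 else -1

lemma sg_eq_or (k : EuclideanSpace ℝ (Fin 2)) : sg k = 1 ∨ sg k = -1 := by
  unfold sg; split_ifs <;> simp

lemma abs_sg (k : EuclideanSpace ℝ (Fin 2)) : |sg k| = 1 := by
  rcases sg_eq_or k with h | h <;> simp [h]

lemma abs_sg_mul_norm (k : EuclideanSpace ℝ (Fin 2)) : |sg k * ‖k‖| = ‖k‖ := by
  rw [abs_mul, abs_sg, one_mul, abs_norm]

lemma eq_zero_of_coords {l : EuclideanSpace ℝ (Fin 2)} (h0 : l 0 = 0) (h1 : l 1 = 0) :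
    l = 0 := by
  ext i; fin_cases i <;> simpa

lemma sg_smul_mul (t : ℝ) (l : EuclideanSpace ℝ (Fin 2)) :
    sg (t • l) * ‖t • l‖ = t * (sg l * ‖l‖) := by
  rcases eq_or_ne l 0 with rfl | hl
  · simp [sg]
  have hne : ¬(l 0 = 0 ∧ l 1 = 0) := fun h => hl (eq_zero_of_coords h.1 h.2)
  rcases lt_trichotomy t 0 with ht | rfl | ht
  · have hsg : sg (t • l) = -sg l := by
      simp only [sg, PiLp.smul_apply, smul_eq_mul]
      show (if 0 < t * l 0 ∨ (t * l 0 = 0 ∧ 0 < t * l 1) then (1:ℝ) else -1) = -(if 0 < l 0 ∨ (l 0 = 0 ∧ 0 < l 1) then 1 else -1)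
      split_ifs with h h' h''
      · exfalso
        rcases h with h | ⟨h1, h2⟩ <;> rcases h' with h' | ⟨h1', h2'⟩ <;> nlinarith
      · norm_num
      · norm_num
      · exfalso
        push_neg at h h''
        replace h' := h''
        rcases lt_trichotomy (l 0) 0 with h0 | h0 | h0
        · nlinarith [h.1]
        · have ht1 : t * l 1 ≤ 0 := h.2 (by rw [h0, mul_zero])
          have hl1 : l 1 ≤ 0 := h'.2 h0
          have : l 1 = 0 := le_antisymm hl1 (by nlinarith)
          exact hne ⟨h0, this⟩
        · nlinarith [h.1]
    rw [hsg, norm_smul, Real.norm_eq_abs, abs_of_neg ht]; ring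
  · simp [sg]
  · have hsg : sg (t • l) = sg l := by
      simp only [sg, PiLp.smul_apply, smul_eq_mul]
      show (if 0 < t * l 0 ∨ (t * l 0 = 0 ∧ 0 < t * l 1) then (1:ℝ) else -1) = (if 0 < l 0 ∨ (l 0 = 0 ∧ 0 < l 1) then 1 else -1)
      split_ifs with h h' h''
      · rfl
      · exfalso
        rcases h with h | ⟨h1, h2⟩
        · exact h' (Or.inl (by nlinarith))
        · push_neg at h'
          have hl0 : l 0 = 0 := by nlinarith [mul_eq_zero.mp h1]
          have : l 1 ≤ 0 := h'.2 hl0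
          nlinarith
      · exfalso
        push_neg at h
        rcases h'' with h' | ⟨h1', h2'⟩
        · nlinarith [h.1]
        · have : t * l 0 = 0 := by rw [h1', mul_zero]
          have := h.2 this
          nlinarith
      · rfl
    rw [hsg, norm_smul, Real.norm_eq_abs, abs_of_pos ht]; ring

lemma collinear_aux {m l : EuclideanSpace ℝ (Fin 2)} {r₁ r₂ : ℝ} (hr₁ : 0 < r₁)
    (h : r₁ • m = r₂ • l) : m = (r₁⁻¹ * r₂) • l := by
  rw [mul_smul, ← h, smul_smul, inv_mul_cancel₀ hr₁.ne', one_smul]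

lemma resonance_key (k l : EuclideanSpace ℝ (Fin 2)) (hk : k ≠ 0) (hl : l ≠ 0)
    (hm : k + l ≠ 0) (ε : ℝ) (hε : ε = 1 ∨ ε = -1) :
    sg k * ‖k‖ - sg l * ‖l‖ ≠ ε * (sg (k + l) * ‖k + l‖) := by
  intro heq
  set m := k + l with hmdef
  have h1 : sg k * ‖k‖ = sg l * ‖l‖ + ε * (sg m * ‖m‖) := by linarith
  have hk' : ‖k‖ = |sg l * ‖l‖ + ε * (sg m * ‖m‖)| := by
    rw [← abs_sg_mul_norm k, h1]
  have hkm : k = m - l := by rw [hmdef]; abel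
  -- first, derive collinearity: ∃ t, k = t • l
  have hcol : ∃ t : ℝ, k = t • l := by
    by_cases hcase : sg l = ε * sg m
    · -- ‖k‖ = ‖l‖ + ‖m‖, so m and -l are on the same ray
      have hu : ε * (sg m * ‖m‖) = sg l * ‖m‖ := by rw [hcase]; ring
      have hnorm : ‖k‖ = ‖l‖ + ‖m‖ := by
        rw [hk', hu, ← mul_add, abs_mul, abs_sg, one_mul,
          abs_of_nonneg (by positivity)]
      have hray : SameRay ℝ m (-l) := by
        apply sameRay_iff_norm_add.mpr
        have : m + -l = k := by rw [hkm]; abel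
        rw [this, norm_neg]
        linarith
      obtain ⟨r₁, r₂, hr₁, hr₂, hr⟩ := hray.exists_pos hm (neg_ne_zero.mpr hl)
      have hmeq : m = (r₁⁻¹ * r₂) • (-l) := collinear_aux hr₁ hr
      refine ⟨-(r₁⁻¹ * r₂) - 1, ?_⟩
      rw [hkm, hmeq, smul_neg, sub_smul, one_smul, neg_smul]
    · -- sg l = -(ε * sg m), so ‖k‖ = |‖l‖ - ‖m‖| and m, l are on the same ray
      have hcase' : sg l = -(ε * sg m) := by
        rcases sg_eq_or l with h | h <;> rcases sg_eq_or m with h' | h' <;>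
          rcases hε with he | he <;> simp [h, h', he] at hcase ⊢
      have hu : ε * (sg m * ‖m‖) = sg l * (-‖m‖) := by rw [hcase']; ring
      have hnorm : ‖k‖ = |‖l‖ - ‖m‖| := by
        rw [hk', hu, show sg l * ‖l‖ + sg l * (-‖m‖) = sg l * (‖l‖ - ‖m‖) by ring,
          abs_mul, abs_sg, one_mul]
      have hray : SameRay ℝ m l := by
        apply sameRay_iff_norm_sub.mpr
        have : m - l = k := by rw [hkm]
        rw [this, abs_sub_comm]
        linarith [hnorm]
      obtain ⟨r₁, r₂, hr₁, hr₂, hr⟩ := hray.exists_pos hm hl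
      have hmeq : m = (r₁⁻¹ * r₂) • l := collinear_aux hr₁ hr
      refine ⟨(r₁⁻¹ * r₂) - 1, ?_⟩
      rw [hkm, hmeq, sub_smul, one_smul]
  obtain ⟨t, ht⟩ := hcol
  have ht0 : t ≠ 0 := by
    rintro rfl
    rw [zero_smul] at ht
    exact hk ht
  have hmeq : m = (t + 1) • l := by
    rw [hmdef, ht, add_smul, one_smul]
  have hF : sg l * ‖l‖ ≠ 0 := by
    have : ‖l‖ ≠ 0 := norm_ne_zero_iff.mpr hl
    rcases sg_eq_or l with h | h <;> simp [h, this]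
  rw [ht, hmeq, sg_smul_mul, sg_smul_mul] at heq
  rcases hε with rfl | rfl
  · have : (t - 1) * (sg l * ‖l‖) = (t + 1) * (sg l * ‖l‖) := by ring_nf; ring_nf at heq; linarith
    have := mul_right_cancel₀ hF this
    linarith
  · have : (t - 1) * (sg l * ‖l‖) = (-(t + 1)) * (sg l * ‖l‖) := by ring_nf; ring_nf at heq; linarith
    have := mul_right_cancel₀ hF this
    have htz : t = 0 := by linarith
    exact ht0 htz

/-- For nonzero `k, l ∈ ℝ²` with `m = k + l ≠ 0`, one never has
`sg(k)|k| − sg(l)|l| = sg(m)|m|` nor `sg(k)|k| − sg(l)|l| = −sg(m)|m|`; i.e. both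
resonance sets are empty. -/
theorem resonance_set_diff_empty
    (k l : EuclideanSpace ℝ (Fin 2)) (hk : k ≠ 0) (hl : l ≠ 0) (hm : k + l ≠ 0) :
    sg k * ‖k‖ - sg l * ‖l‖ ≠ sg (k + l) * ‖k + l‖ ∧
    sg k * ‖k‖ - sg l * ‖l‖ ≠ -(sg (k + l) * ‖k + l‖) := by
  constructor
  · have h := resonance_key k l hk hl hm 1 (Or.inl rfl)
    simpa using h
  · have h := resonance_key k l hk hl hm (-1) (Or.inr rfl)
    intro hc
    apply h
    rw [hc]; ring
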